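/- Consider an isotropic n-step random walk on S^{p-1} with deterministic initial direction x₀ = μ and conditional step pdfs f(x_k | x_{k−1}) = g_{k,k−1}(x_{k−1}ᵀx_k). Let ρ_{k,k−1} = ∫_{S^{p-1}} (μᵀy) g_{k,k−1}(μᵀy) dy be the mean resultant length of the k-th step distribution. Then for all n ≥ 1, the mean of x_n is E[x_n] = (∏_{k=1}^n ρ_{k,k−1}) μ. -/

import Mathlib

open MeasureTheory Set
open scoped Pointwise
open scoped RealInnerProductSpace

noncomputable section

/-- The unit sphere `S^{p-1} = {x ∈ ℝ^p : ‖x‖ = 1}` in `ℝ^p`. -/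
abbrev Sph (p : ℕ) : Type := Metric.sphere (0 : EuclideanSpace ℝ (Fin p)) 1

/-- The `(p-1)`-dimensional surface measure on the unit sphere `S^{p-1}`. -/
def sphMeasure (p : ℕ) : Measure (Sph p) :=
  (volume : Measure (EuclideanSpace ℝ (Fin p))).toSphere

/-- The cosine `xᵀy` of the angle between two points of the sphere. -/
def cosAngle {p : ℕ} (x y : Sph p) : ℝ :=
  ⟪(x : EuclideanSpace ℝ (Fin p)), (y : EuclideanSpace ℝ (Fin p))⟫

/-- The spherical convolution `(f ⋆_μ g)(x) = ∫_{S^{p-1}} F(xᵀy) G(yᵀμ) dy` of two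
rotationally symmetric functions `f(x) = F(μᵀx)`, `g(x) = G(μᵀx)` about the axis `μ`. -/
def sphConv {p : ℕ} (F G : ℝ → ℝ) (μ : Sph p) (x : Sph p) : ℝ :=
  ∫ y : Sph p, F (cosAngle x y) * G (cosAngle y μ) ∂(sphMeasure p)

/-- `F : [-1,1] → ℝ` is the profile of a rotationally symmetric probability density
function `x ↦ F(μᵀx)` on `S^{p-1}`: it is nonnegative and the corresponding rotationally
symmetric function is integrable with total integral `1` (about any axis). -/
def IsPdfProfile (p : ℕ) (F : ℝ → ℝ) : Prop :=
  (∀ t ∈ Icc (-1 : ℝ) 1, 0 ≤ F t) ∧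
  ∀ μ : Sph p, Integrable (fun x : Sph p => F (cosAngle μ x)) (sphMeasure p) ∧
    ∫ x : Sph p, F (cosAngle μ x) ∂(sphMeasure p) = 1

/-- The marginal probability density (w.r.t. the surface measure) of the `n`-th position
`x_n` of the isotropic random walk on `S^{p-1}` started at the deterministic direction
`x₀ = μ`, whose `k`-th step has conditional pdf `f(x_k | x_{k-1}) = g k (x_{k-1}ᵀ x_k)`,
the steps being generated independently (Chapman–Kolmogorov recursion). -/
def walkPdf {p : ℕ} (μ : Sph p) (g : ℕ → ℝ → ℝ) : ℕ → Sph p → ℝ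
  | 0 => fun _ => 0
  | 1 => fun x => g 1 (cosAngle μ x)
  | (n + 2) => fun x =>
      ∫ y : Sph p, g (n + 2) (cosAngle y x) * walkPdf μ g (n + 1) y ∂(sphMeasure p)

namespace Aux
open scoped Classical

variable {p : ℕ}

local notation "𝔼" => EuclideanSpace ℝ (Fin p)

lemma norm_coe (x : Sph p) : ‖(x : 𝔼)‖ = 1 := mem_sphere_zero_iff_norm.mp x.2

lemma cosAngle_mem_Icc (x y : Sph p) : cosAngle x y ∈ Icc (-1:ℝ) 1 := by
  have h := abs_real_inner_le_norm (x : 𝔼) (y : 𝔼)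
  rw [norm_coe, norm_coe, mul_one] at h
  exact abs_le.mp h

instance : IsFiniteMeasure (sphMeasure p) := by
  unfold sphMeasure; infer_instance

def sphMap (f : 𝔼 ≃ₗᵢ[ℝ] 𝔼) (x : Sph p) : Sph p :=
  ⟨f x, by rw [mem_sphere_zero_iff_norm, f.norm_map]; exact norm_coe x⟩

lemma sphMap_coe (f : 𝔼 ≃ₗᵢ[ℝ] 𝔼) (x : Sph p) : ((sphMap f x : Sph p) : 𝔼) = f x := rfl

lemma continuous_sphMap (f : 𝔼 ≃ₗᵢ[ℝ] 𝔼) : Continuous (sphMap (p := p) f) :=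
  Continuous.subtype_mk (f.continuous.comp continuous_subtype_val) _

def sphEquiv (f : 𝔼 ≃ₗᵢ[ℝ] 𝔼) : Sph p ≃ᵐ Sph p where
  toFun := sphMap f
  invFun := sphMap f.symm
  left_inv x := Subtype.ext (by simp [sphMap])
  right_inv x := Subtype.ext (by simp [sphMap])
  measurable_toFun := (continuous_sphMap f).measurable
  measurable_invFun := (continuous_sphMap f.symm).measurable

lemma smul_preimage (f : 𝔼 ≃ₗᵢ[ℝ] 𝔼) (t : Set ℝ) (A : Set 𝔼) :
    t • (⇑f ⁻¹' A) = ⇑f ⁻¹' (t • A) := by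
  ext x
  simp only [Set.mem_smul, mem_preimage]
  constructor
  · rintro ⟨c, hc, y, hy, rfl⟩
    exact ⟨c, hc, f y, hy, (f.map_smul c y).symm⟩
  · rintro ⟨c, hc, y, hy, hxy⟩
    refine ⟨c, hc, f.symm y, by simpa using hy, ?_⟩
    apply f.injective
    rw [f.map_smul, f.apply_symm_apply, hxy]

lemma key_aux (r : Ioi (0:ℝ)) (s : Set (Sph p)) :
    (Subtype.val '' ((homeomorphUnitSphereProd 𝔼) ⁻¹' (s ×ˢ Iio r)))
      = Ioo (0:ℝ) (r:ℝ) • (Subtype.val '' s) := by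
  rw [← Set.image2_smul, Set.image2_image_right, ← Homeomorph.image_symm, Set.image_image,
    ← Set.image_subtype_val_Ioi_Iio, Set.image2_image_left, Set.image2_swap, ← Set.image_prod]
  rfl

lemma measurableSet_Ioo_smul {s : Set (Sph p)} (hs : MeasurableSet s) :
    MeasurableSet (Ioo (0:ℝ) 1 • (Subtype.val '' s) : Set 𝔼) := by
  have key : (Subtype.val ''
        ((homeomorphUnitSphereProd 𝔼) ⁻¹' (s ×ˢ Iio ⟨1, mem_Ioi.2 one_pos⟩)))
      = Ioo (0:ℝ) 1 • (Subtype.val '' s) := key_aux ⟨1, mem_Ioi.2 one_pos⟩ s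
  rw [← key]
  exact (MeasurableEmbedding.subtype_coe (measurableSet_singleton (0:𝔼)).compl).measurableSet_image'
    ((homeomorphUnitSphereProd 𝔼).measurable (hs.prod measurableSet_Iio))

lemma sphMap_measurePreserving (f : 𝔼 ≃ₗᵢ[ℝ] 𝔼) :
    MeasurePreserving (sphMap f) (sphMeasure p) (sphMeasure p) := by
  refine ⟨(continuous_sphMap f).measurable, ?_⟩
  refine Measure.ext fun s hs => ?_
  rw [Measure.map_apply (continuous_sphMap f).measurable hs]
  have hpre : MeasurableSet (sphMap f ⁻¹' s) := (continuous_sphMap f).measurable hs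
  simp only [sphMeasure]
  rw [Measure.toSphere_apply' _ hpre, Measure.toSphere_apply' _ hs]
  congr 1
  have h1 : (Subtype.val '' (sphMap f ⁻¹' s) : Set 𝔼) = ⇑f ⁻¹' (Subtype.val '' s) := by
    ext x
    simp only [mem_image, mem_preimage]
    constructor
    · rintro ⟨y, hy, rfl⟩
      exact ⟨sphMap f y, hy, rfl⟩
    · rintro ⟨y, hy, hxy⟩
      have hx : x ∈ Metric.sphere (0:𝔼) 1 := by
        rw [mem_sphere_zero_iff_norm, ← f.norm_map x, ← hxy]
        exact norm_coe y
      refine ⟨⟨x, hx⟩, ?_, rfl⟩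
      show sphMap f ⟨x, hx⟩ ∈ s
      have : sphMap f ⟨x, hx⟩ = y := Subtype.ext hxy.symm
      rw [this]; exact hy
  rw [h1, smul_preimage]
  exact f.measurePreserving.measure_preimage (measurableSet_Ioo_smul hs).nullMeasurableSet

lemma integral_sphMap {G : Type*} [NormedAddCommGroup G] [NormedSpace ℝ G]
    (f : 𝔼 ≃ₗᵢ[ℝ] 𝔼) (F : Sph p → G) :
    ∫ x, F (sphMap f x) ∂(sphMeasure p) = ∫ x, F x ∂(sphMeasure p) :=
  (sphMap_measurePreserving f).integral_comp (sphEquiv f).measurableEmbedding F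


lemma integral_smul_sphere (F : ℝ → ℝ) (ν : Sph p)
    (hInt : Integrable (fun x : Sph p => F (cosAngle ν x)) (sphMeasure p)) :
    ∫ x : Sph p, F (cosAngle ν x) • (x : 𝔼) ∂(sphMeasure p)
      = (∫ x : Sph p, cosAngle ν x * F (cosAngle ν x) ∂(sphMeasure p)) • (ν : 𝔼) := by
  have hIntV : Integrable (fun x : Sph p => F (cosAngle ν x) • (x : 𝔼)) (sphMeasure p) := by
    refine Integrable.mono' hInt.norm
      (hInt.aestronglyMeasurable.smul continuous_subtype_val.aestronglyMeasurable) ?_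
    filter_upwards with x
    rw [norm_smul, norm_coe, mul_one]
  set R : 𝔼 ≃ₗᵢ[ℝ] 𝔼 := Submodule.reflection (ℝ ∙ ((ν : 𝔼))) with hRdef
  have hRν : R (ν : 𝔼) = (ν : 𝔼) :=
    Submodule.reflection_mem_subspace_eq_self (Submodule.mem_span_singleton_self _)
  have hcos : ∀ x : Sph p, cosAngle ν (sphMap R x) = cosAngle ν x := by
    intro x
    show ⟪(ν:𝔼), R (x:𝔼)⟫ = ⟪(ν:𝔼), (x:𝔼)⟫
    conv_lhs => rw [← hRν]
    exact R.inner_map_map _ _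
  set v := ∫ x : Sph p, F (cosAngle ν x) • (x : 𝔼) ∂(sphMeasure p) with hv
  have hRv : R v = v := by
    have hL := ContinuousLinearMap.integral_comp_comm
      (R.toContinuousLinearEquiv.toContinuousLinearMap) hIntV
    calc R v = ∫ x : Sph p, R (F (cosAngle ν x) • (x:𝔼)) ∂(sphMeasure p) := hL.symm
    _ = ∫ x : Sph p, F (cosAngle ν x) • R (x:𝔼) ∂(sphMeasure p) := by
        congr 1; funext x; rw [R.map_smul]
    _ = ∫ x : Sph p, F (cosAngle ν (sphMap R x)) • ((sphMap R x : Sph p) : 𝔼) ∂(sphMeasure p) := by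
        congr 1; funext x; rw [hcos]; rfl
    _ = v := integral_sphMap R (fun z : Sph p => F (cosAngle ν z) • (z:𝔼))
  obtain ⟨c, hc⟩ := Submodule.mem_span_singleton.mp ((Submodule.reflection_eq_self_iff v).mp hRv)
  have hinner : ⟪(ν:𝔼), v⟫ = c := by
    rw [← hc, real_inner_smul_right, real_inner_self_eq_norm_sq, norm_coe]
    ring
  have hrho : ∫ x : Sph p, cosAngle ν x * F (cosAngle ν x) ∂(sphMeasure p) = c := by
    rw [← hinner, hv, ← integral_inner hIntV]
    congr 1; funext x
    rw [real_inner_smul_right, mul_comm]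
    rfl
  rw [hrho]; exact hc.symm

lemma rho_indep (F : ℝ → ℝ) (μ ν : Sph p) :
    ∫ x : Sph p, cosAngle ν x * F (cosAngle ν x) ∂(sphMeasure p)
      = ∫ x : Sph p, cosAngle μ x * F (cosAngle μ x) ∂(sphMeasure p) := by
  rcases eq_or_ne (μ : 𝔼) (ν : 𝔼) with h | h
  · rw [Subtype.ext h]
  · set S : 𝔼 ≃ₗᵢ[ℝ] 𝔼 := Submodule.reflection (ℝ ∙ ((μ:𝔼) - (ν:𝔼)))ᗮ with hS
    have hSμ : S (μ:𝔼) = (ν:𝔼) := Submodule.reflection_sub (by rw [norm_coe, norm_coe])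
    have hcos : ∀ x : Sph p, cosAngle ν (sphMap S x) = cosAngle μ x := by
      intro x
      show ⟪(ν:𝔼), S (x:𝔼)⟫ = ⟪(μ:𝔼), (x:𝔼)⟫
      conv_lhs => rw [← hSμ]
      exact S.inner_map_map _ _
    calc ∫ x : Sph p, cosAngle ν x * F (cosAngle ν x) ∂(sphMeasure p)
        = ∫ x : Sph p, cosAngle ν (sphMap S x) * F (cosAngle ν (sphMap S x)) ∂(sphMeasure p) :=
          (integral_sphMap S (fun z : Sph p => cosAngle ν z * F (cosAngle ν z))).symm
      _ = _ := by congr 1; funext x; rw [hcos]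

lemma integral_smul_sphere' (F : ℝ → ℝ) (μ ν : Sph p)
    (hInt : ∀ κ : Sph p, Integrable (fun x : Sph p => F (cosAngle κ x)) (sphMeasure p)) :
    ∫ x : Sph p, F (cosAngle ν x) • (x : 𝔼) ∂(sphMeasure p)
      = (∫ x : Sph p, cosAngle μ x * F (cosAngle μ x) ∂(sphMeasure p)) • (ν : 𝔼) := by
  rw [integral_smul_sphere F ν (hInt ν), rho_indep F μ ν]

def swapIso (μ ν : Sph p) : 𝔼 ≃ₗᵢ[ℝ] 𝔼 :=
  if h : (ν : 𝔼) = (μ : 𝔼) then LinearIsometryEquiv.refl ℝ 𝔼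
  else Submodule.reflection (ℝ ∙ ((μ:𝔼) - (ν:𝔼)))ᗮ

lemma swapIso_apply_base (μ ν : Sph p) : swapIso μ ν (μ:𝔼) = (ν:𝔼) := by
  rw [swapIso]
  split_ifs with h
  · simpa using h.symm
  · exact Submodule.reflection_sub (by rw [norm_coe, norm_coe])

lemma swapIso_involutive (μ ν : Sph p) (x : 𝔼) : swapIso μ ν (swapIso μ ν x) = x := by
  rw [swapIso]
  split_ifs with h
  · rfl
  · exact Submodule.reflection_reflection _ _

lemma cosAngle_swap (μ ν x : Sph p) :
    cosAngle μ (sphMap (swapIso μ ν) x) = cosAngle ν x := by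
  show ⟪(μ:𝔼), swapIso μ ν (x:𝔼)⟫ = ⟪(ν:𝔼), (x:𝔼)⟫
  conv_lhs => rw [← swapIso_involutive μ ν (μ:𝔼)]
  rw [(swapIso μ ν).inner_map_map, swapIso_apply_base]

lemma swapIso_apply (μ ν : Sph p) (x : 𝔼) :
    swapIso μ ν x = if (ν:𝔼) = (μ:𝔼) then x
      else x - (2 * (⟪(μ:𝔼) - (ν:𝔼), x⟫ / ((‖(μ:𝔼) - (ν:𝔼)‖ : ℝ) ^ 2))) • ((μ:𝔼) - (ν:𝔼)) := by
  rw [swapIso]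
  split_ifs with h
  · rfl
  · rw [Submodule.reflection_apply, Submodule.starProjection_orthogonal_val, Submodule.starProjection_singleton]
    simp only [RCLike.ofReal_real_eq_id, id_eq]
    module

lemma measurable_jointly (μ : Sph p) :
    Measurable (fun z : Sph p × Sph p => sphMap (swapIso μ z.2) z.1) := by
  simp only [sphMap]
  apply Measurable.subtype_mk
  have heq : (fun z : Sph p × Sph p => swapIso μ z.2 ((z.1 : 𝔼)))
      = fun z : Sph p × Sph p => if ((z.2 : 𝔼)) = (μ:𝔼) then (z.1:𝔼)
          else (z.1:𝔼) - (2 * (⟪(μ:𝔼) - (z.2:𝔼), (z.1:𝔼)⟫ /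
            ((‖(μ:𝔼) - (z.2:𝔼)‖ : ℝ) ^ 2))) • ((μ:𝔼) - (z.2:𝔼)) := by
    funext z; exact swapIso_apply μ z.2 (z.1:𝔼)
  rw [heq]
  have hc1 : Continuous (fun z : Sph p × Sph p => ((z.1 : 𝔼))) :=
    continuous_subtype_val.comp continuous_fst
  have hc2 : Continuous (fun z : Sph p × Sph p => ((μ:𝔼) - (z.2:𝔼))) :=
    continuous_const.sub (continuous_subtype_val.comp continuous_snd)
  apply Measurable.ite
  · exact (continuous_subtype_val.comp continuous_snd).measurable (measurableSet_singleton (μ:𝔼))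
  · exact hc1.measurable
  · refine (hc1.measurable.sub (Measurable.fun_smul ?_ hc2.measurable))
    refine Measurable.const_mul (Measurable.div ?_ ?_) 2
    · exact (Continuous.inner hc2 hc1).measurable
    · exact (hc2.norm.pow 2).measurable

lemma meas_rep (μ : Sph p) (F : ℝ → ℝ)
    (hInt : Integrable (fun x : Sph p => F (cosAngle μ x)) (sphMeasure p)) :
    ∃ H : Sph p × Sph p → ℝ, Measurable H ∧
      (∀ᵐ z ∂((sphMeasure p).prod (sphMeasure p)), H z = F (cosAngle z.2 z.1)) := by
  set Fμ : Sph p → ℝ := fun w => F (cosAngle μ w) with hFμ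
  have hasm := hInt.aestronglyMeasurable
  set h : Sph p → ℝ := hasm.mk Fμ with hh
  have hmeas : StronglyMeasurable h := hasm.stronglyMeasurable_mk
  have hae : Fμ =ᵐ[sphMeasure p] h := hasm.ae_eq_mk
  set N : Set (Sph p) := toMeasurable (sphMeasure p) {w | Fμ w ≠ h w} with hN
  have hNmeas : MeasurableSet N := measurableSet_toMeasurable _ _
  have hN0 : sphMeasure p N = 0 := by
    rw [hN, measure_toMeasurable]
    exact ae_iff.mp hae
  refine ⟨fun z => h (sphMap (swapIso μ z.2) z.1),
    hmeas.measurable.comp (measurable_jointly μ), ?_⟩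
  have key : ∀ z : Sph p × Sph p, Fμ (sphMap (swapIso μ z.2) z.1) = F (cosAngle z.2 z.1) := by
    intro z
    rw [hFμ]
    simp only
    rw [cosAngle_swap]
  have hsub : {z : Sph p × Sph p | ¬ (h (sphMap (swapIso μ z.2) z.1) = F (cosAngle z.2 z.1))}
      ⊆ (fun z : Sph p × Sph p => sphMap (swapIso μ z.2) z.1) ⁻¹' N := by
    intro z hz
    have hne : Fμ (sphMap (swapIso μ z.2) z.1) ≠ h (sphMap (swapIso μ z.2) z.1) := by
      intro heq
      exact hz (by rw [← heq, key z])
    exact subset_toMeasurable _ _ hne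
  rw [ae_iff]
  refine measure_mono_null hsub ?_
  rw [Measure.prod_apply_symm ((measurable_jointly μ) hNmeas)]
  have hz : ∀ y : Sph p, (sphMeasure p)
      ((fun x => (x, y)) ⁻¹' ((fun z : Sph p × Sph p => sphMap (swapIso μ z.2) z.1) ⁻¹' N)) = 0 := by
    intro y
    have : ((fun x : Sph p => (x, y)) ⁻¹' ((fun z : Sph p × Sph p => sphMap (swapIso μ z.2) z.1) ⁻¹' N))
        = sphMap (swapIso μ y) ⁻¹' N := rfl
    rw [this, (sphMap_measurePreserving (swapIso μ y)).measure_preimage hNmeas.nullMeasurableSet]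
    exact hN0
  simp only [hz]
  simp

lemma step_lemma (μ : Sph p) (F : ℝ → ℝ) (hF : IsPdfProfile p F)
    (w : Sph p → ℝ) (hw : Integrable w (sphMeasure p)) :
    Integrable (fun x : Sph p => ∫ y, F (cosAngle y x) * w y ∂(sphMeasure p)) (sphMeasure p) ∧
    (∫ x : Sph p, (∫ y, F (cosAngle y x) * w y ∂(sphMeasure p)) ∂(sphMeasure p)
        = ∫ y, w y ∂(sphMeasure p)) ∧
    (∫ x : Sph p, (∫ y, F (cosAngle y x) * w y ∂(sphMeasure p)) • (x : 𝔼) ∂(sphMeasure p)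
        = (∫ x : Sph p, cosAngle μ x * F (cosAngle μ x) ∂(sphMeasure p)) •
            (∫ y : Sph p, w y • (y : 𝔼) ∂(sphMeasure p))) := by
  obtain ⟨H, hHmeas, hHae⟩ := meas_rep μ F (hF.2 μ).1
  set m := sphMeasure p with hm
  set Φ : Sph p × Sph p → ℝ := fun z => F (cosAngle z.2 z.1) * w z.2 with hΦ
  have hwsnd : AEStronglyMeasurable (fun z : Sph p × Sph p => w z.2) (m.prod m) :=
    (hw.aemeasurable.comp_snd (μ := m)).aestronglyMeasurable
  have hΦasm : AEStronglyMeasurable Φ (m.prod m) := by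
    refine AEStronglyMeasurable.congr
      (hHmeas.aestronglyMeasurable.mul hwsnd) ?_
    filter_upwards [hHae] with z hz
    simp only [Pi.mul_apply, hΦ]
    rw [hz]
  have habs : ∀ y x : Sph p, ‖F (cosAngle y x)‖ = F (cosAngle y x) := by
    intro y x
    rw [Real.norm_eq_abs]
    exact abs_of_nonneg (hF.1 _ (cosAngle_mem_Icc y x))
  have hΦint : Integrable Φ (m.prod m) := by
    rw [integrable_prod_iff' hΦasm]
    constructor
    · filter_upwards with y
      exact ((hF.2 y).1.mul_const (w y))
    · have heq : (fun y => ∫ x, ‖Φ (x, y)‖ ∂m) = fun y => ‖w y‖ := by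
        funext y
        have h1 : (fun x : Sph p => ‖Φ (x, y)‖) = fun x => F (cosAngle y x) * ‖w y‖ := by
          funext x
          rw [hΦ]
          simp only
          rw [norm_mul, habs]
        rw [h1, integral_mul_const, (hF.2 y).2, one_mul]
      rw [heq]
      exact hw.norm
  have hΦvasm : AEStronglyMeasurable (fun z : Sph p × Sph p => Φ z • ((z.1 : 𝔼))) (m.prod m) :=
    hΦasm.smul ((continuous_subtype_val.comp continuous_fst).aestronglyMeasurable)
  have hΦvint : Integrable (fun z : Sph p × Sph p => Φ z • ((z.1 : 𝔼))) (m.prod m) := by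
    refine Integrable.mono' hΦint.norm hΦvasm ?_
    filter_upwards with z
    rw [norm_smul, norm_coe, mul_one]
  refine ⟨?_, ?_, ?_⟩
  · exact hΦint.integral_prod_left
  · calc ∫ x : Sph p, (∫ y, F (cosAngle y x) * w y ∂m) ∂m
        = ∫ y, (∫ x, F (cosAngle y x) * w y ∂m) ∂m :=
          integral_integral_swap (f := fun x y => F (cosAngle y x) * w y) hΦint
      _ = ∫ y, w y ∂m := by
          congr 1; funext y
          rw [integral_mul_const, (hF.2 y).2, one_mul]
  · calc ∫ x : Sph p, (∫ y, F (cosAngle y x) * w y ∂m) • (x : 𝔼) ∂m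
        = ∫ x : Sph p, (∫ y, (F (cosAngle y x) * w y) • (x : 𝔼) ∂m) ∂m := by
          congr 1; funext x
          rw [integral_smul_const]
      _ = ∫ y, (∫ x : Sph p, (F (cosAngle y x) * w y) • (x : 𝔼) ∂m) ∂m :=
          integral_integral_swap (f := fun x y => (F (cosAngle y x) * w y) • (x : 𝔼)) hΦvint
      _ = ∫ y : Sph p, w y • ((∫ x : Sph p, cosAngle μ x * F (cosAngle μ x) ∂m) • (y : 𝔼)) ∂m := by
          congr 1; funext y
          have h1 : (fun x : Sph p => (F (cosAngle y x) * w y) • (x : 𝔼))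
              = fun x : Sph p => w y • (F (cosAngle y x) • (x : 𝔼)) := by
            funext x
            rw [mul_comm, mul_smul]
          rw [h1, integral_smul, integral_smul_sphere' F μ y (fun κ => (hF.2 κ).1)]
      _ = (∫ x : Sph p, cosAngle μ x * F (cosAngle μ x) ∂m) •
            (∫ y : Sph p, w y • (y : 𝔼) ∂m) := by
          have h2 : (fun y : Sph p => w y • ((∫ x : Sph p, cosAngle μ x * F (cosAngle μ x) ∂m) • (y : 𝔼)))
              = fun y : Sph p => (∫ x : Sph p, cosAngle μ x * F (cosAngle μ x) ∂m) • (w y • (y : 𝔼)) := by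
            funext y
            rw [smul_comm]
          rw [h2, integral_smul]

end Aux

theorem stmt_5 {p : ℕ} (hp : 2 ≤ p) (μ : Sph p) (g : ℕ → ℝ → ℝ)
    (hg : ∀ k : ℕ, 1 ≤ k → IsPdfProfile p (g k)) (n : ℕ) (hn : 1 ≤ n) :
    ∫ y : Sph p, walkPdf μ g n y • (y : EuclideanSpace ℝ (Fin p)) ∂(sphMeasure p) =
      (∏ k ∈ Finset.Icc 1 n,
          ∫ y : Sph p, cosAngle μ y * g k (cosAngle μ y) ∂(sphMeasure p)) •
        (μ : EuclideanSpace ℝ (Fin p)) := by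
  have main : ∀ n : ℕ, 1 ≤ n →
      Integrable (walkPdf μ g n) (sphMeasure p) ∧
      (∫ y, walkPdf μ g n y ∂(sphMeasure p)) = 1 ∧
      (∫ y : Sph p, walkPdf μ g n y • (y : EuclideanSpace ℝ (Fin p)) ∂(sphMeasure p) =
        (∏ k ∈ Finset.Icc 1 n,
            ∫ y : Sph p, cosAngle μ y * g k (cosAngle μ y) ∂(sphMeasure p)) •
          (μ : EuclideanSpace ℝ (Fin p))) := by
    refine Nat.le_induction ?_ ?_
    · refine ⟨((hg 1 le_rfl).2 μ).1, ((hg 1 le_rfl).2 μ).2, ?_⟩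
      have h1 : walkPdf μ g 1 = fun x => g 1 (cosAngle μ x) := rfl
      rw [h1, Aux.integral_smul_sphere' (g 1) μ μ (fun κ => ((hg 1 le_rfl).2 κ).1),
        Finset.Icc_self, Finset.prod_singleton]
    · rintro n hn ⟨hInt, hMass, hMean⟩
      obtain ⟨m, rfl⟩ : ∃ m, n = m + 1 := ⟨n - 1, (Nat.succ_pred_eq_of_pos hn).symm⟩
      have hstep := Aux.step_lemma μ (g (m + 1 + 1)) (hg (m + 1 + 1) (by omega))
        (walkPdf μ g (m + 1)) hInt
      have hdef : walkPdf μ g (m + 1 + 1)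
          = fun x => ∫ y, g (m + 1 + 1) (cosAngle y x) * walkPdf μ g (m + 1) y
              ∂(sphMeasure p) := rfl
      refine ⟨?_, ?_, ?_⟩
      · rw [hdef]; exact hstep.1
      · rw [hdef, hstep.2.1, hMass]
      · rw [hdef, hstep.2.2, hMean, smul_smul]
        congr 1
        rw [Finset.prod_Icc_succ_top (by omega : 1 ≤ m + 1 + 1)]
        ring
  exact (main n hn).2.2
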